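/- The set of λ ∈ S¹ satisfying the Siegel diophantine condition — there exist β ≥ 1 and γ > 0 with 1/Ω_λ(m) ≤ γ m^β for all m ≥ 2, where Ω_λ(m) = min_{1≤k≤m}|λ^k − 1| — has full Lebesgue (Haar) measure in S¹. -/

import Mathlib

open MeasureTheory

/-- `Ω_λ(m) = min_{1 ≤ k ≤ m} |λ^k − 1|`. -/
noncomputable def OmegaMin (lam : ℂ) (m : ℕ) : ℝ :=
  sInf {x : ℝ | ∃ k : ℕ, 1 ≤ k ∧ k ≤ m ∧ x = ‖lam ^ k - 1‖}

/-- Lower bound on `‖e^{2πix} − 1‖` in terms of the distance of `x` to the integers. -/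
lemma norm_exp_sub_one_ge (x : ℝ) :
    2 * |x - round x| ≤ ‖Complex.exp (2 * Real.pi * Complex.I * x) - 1‖ := by
  set d : ℝ := x - round x with hd
  have hd2 : |d| ≤ 1 / 2 := abs_sub_round x
  have h1 : 2 * Real.pi * Complex.I * x = ((2 * Real.pi * x : ℝ) : ℂ) * Complex.I := by
    push_cast; ring
  rw [h1]
  have hxd : 2 * Real.pi * x = 2 * Real.pi * d + (round x : ℤ) * (2 * Real.pi) := by
    rw [hd]; push_cast; ring
  have hre : (Complex.exp (((2 * Real.pi * x : ℝ) : ℂ) * Complex.I) - 1).re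
      = Real.cos (2 * Real.pi * d) - 1 := by
    rw [Complex.sub_re, Complex.exp_ofReal_mul_I_re, Complex.one_re, hxd,
      Real.cos_add_int_mul_two_pi]
  have him : (Complex.exp (((2 * Real.pi * x : ℝ) : ℂ) * Complex.I) - 1).im
      = Real.sin (2 * Real.pi * d) := by
    rw [Complex.sub_im, Complex.exp_ofReal_mul_I_im, Complex.one_im, hxd,
      Real.sin_add_int_mul_two_pi, sub_zero]
  have hpi : (0 : ℝ) < Real.pi := Real.pi_pos
  rcases le_or_gt |d| (1 / 4) with h4 | h4
  · -- use the imaginary part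
    have habs : |Real.sin (2 * Real.pi * d)| = |Real.sin (2 * Real.pi * |d|)| := by
      rcases abs_cases d with ⟨h, _⟩ | ⟨h, _⟩
      · rw [h]
      · rw [h]
        have : 2 * Real.pi * -d = -(2 * Real.pi * d) := by ring
        rw [this, Real.sin_neg, abs_neg]
    have hsin : 4 * |d| ≤ Real.sin (2 * Real.pi * |d|) := by
      have := Real.mul_le_sin (x := 2 * Real.pi * |d|) (by positivity)
        (by nlinarith [abs_nonneg d])
      have hpi' : Real.pi ≠ 0 := ne_of_gt hpi
      calc 4 * |d| = 2 / Real.pi * (2 * Real.pi * |d|) := by field_simp; ring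
        _ ≤ Real.sin (2 * Real.pi * |d|) := this
    have him_ge : 2 * |d| ≤ |(Complex.exp (((2 * Real.pi * x : ℝ) : ℂ) * Complex.I) - 1).im| := by
      rw [him, habs]
      have : Real.sin (2 * Real.pi * |d|) ≤ |Real.sin (2 * Real.pi * |d|)| := le_abs_self _
      nlinarith [abs_nonneg d]
    calc 2 * |d| ≤ |(Complex.exp (((2 * Real.pi * x : ℝ) : ℂ) * Complex.I) - 1).im| := him_ge
      _ ≤ ‖Complex.exp (((2 * Real.pi * x : ℝ) : ℂ) * Complex.I) - 1‖ := Complex.abs_im_le_norm _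
  · -- use the real part
    have hcos : Real.cos (2 * Real.pi * d) ≤ 0 := by
      have heq : Real.cos (2 * Real.pi * d) = Real.cos (2 * Real.pi * |d|) := by
        rcases abs_cases d with ⟨h, _⟩ | ⟨h, _⟩
        · rw [h]
        · rw [h]
          have : 2 * Real.pi * -d = -(2 * Real.pi * d) := by ring
          rw [this, Real.cos_neg]
      rw [heq]
      apply Real.cos_nonpos_of_pi_div_two_le_of_le
      · nlinarith
      · nlinarith
    have hre_ge : 2 * |d| ≤ |(Complex.exp (((2 * Real.pi * x : ℝ) : ℂ) * Complex.I) - 1).re| := by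
      rw [hre]
      have habs2 : |Real.cos (2 * Real.pi * d) - 1| = 1 - Real.cos (2 * Real.pi * d) := by
        rw [abs_of_nonpos (by linarith)]; ring
      rw [habs2]
      linarith
    calc 2 * |d| ≤ |(Complex.exp (((2 * Real.pi * x : ℝ) : ℂ) * Complex.I) - 1).re| := hre_ge
      _ ≤ ‖Complex.exp (((2 * Real.pi * x : ℝ) : ℂ) * Complex.I) - 1‖ := Complex.abs_re_le_norm _

/-- Pointwise statement: an irrational, non-Liouville `θ` satisfies Siegel's condition. -/
lemma siegel_of_irrational_not_liouville {θ : ℝ} (hirr : Irrational θ) (hL : ¬ Liouville θ) :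
    ∃ β : ℝ, 1 ≤ β ∧ ∃ γ : ℝ, 0 < γ ∧
      ∀ m : ℕ, 2 ≤ m →
        1 / OmegaMin (Complex.exp (2 * Real.pi * Complex.I * θ)) m ≤ γ * (m : ℝ) ^ β := by
  simp only [Liouville, not_forall, not_exists, not_and, not_lt] at hL
  obtain ⟨n, hn⟩ := hL
  set N : ℕ := max n 2 with hN
  have hN2 : 2 ≤ N := le_max_right _ _
  -- Diophantine estimate
  have hdio : ∀ a : ℤ, ∀ k : ℕ, 2 ≤ k → (1 : ℝ) / (k : ℝ) ^ N ≤ |θ - a / k| := by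
    intro a k hk
    have hb : (1 : ℤ) < (k : ℤ) := by exact_mod_cast hk.trans_lt' one_lt_two
    have hne : θ ≠ (a : ℝ) / ((k : ℤ) : ℝ) := (irrational_iff_ne_rational θ).mp hirr a k (by omega)
    have h := hn a k hb hne
    have hk1 : (1 : ℝ) ≤ (k : ℝ) := by exact_mod_cast Nat.one_le_of_lt hk
    have hpow : (k : ℝ) ^ n ≤ (k : ℝ) ^ N := pow_le_pow_right₀ hk1 (le_max_left _ _)
    have hkn : (0 : ℝ) < (k : ℝ) ^ n := by positivity
    calc (1 : ℝ) / (k : ℝ) ^ N ≤ 1 / (k : ℝ) ^ n := by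
          apply one_div_le_one_div_of_le hkn hpow
      _ ≤ |θ - a / k| := by push_cast at h; exact h
  set lam : ℂ := Complex.exp (2 * Real.pi * Complex.I * θ) with hlam
  have hlam1 : lam ≠ 1 := by
    intro h
    rw [hlam, Complex.exp_eq_one_iff] at h
    obtain ⟨j, hj⟩ := h
    have h2pi : (2 * Real.pi * Complex.I : ℂ) ≠ 0 :=
      mul_ne_zero (mul_ne_zero two_ne_zero (Complex.ofReal_ne_zero.mpr Real.pi_ne_zero))
        Complex.I_ne_zero
    have : (θ : ℂ) = (j : ℂ) := by
      have := mul_left_cancel₀ h2pi (by rw [hj]; ring : 2 * Real.pi * Complex.I * θ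
        = 2 * Real.pi * Complex.I * (j : ℂ))
      exact this
    have : θ = (j : ℝ) := by exact_mod_cast this
    exact hirr.ne_int j this
  set c : ℝ := ‖lam - 1‖ with hc
  have hcpos : 0 < c := by
    rw [hc]; exact norm_pos_iff.mpr (sub_ne_zero.mpr hlam1)
  refine ⟨((N - 1 : ℕ) : ℝ), ?_, 1 / c + 1 / 2, by positivity, ?_⟩
  · exact_mod_cast Nat.le_sub_one_of_lt hN2
  intro m hm
  set γ : ℝ := 1 / c + 1 / 2 with hγ
  have hγpos : 0 < γ := by positivity
  have hm1 : (1 : ℝ) ≤ (m : ℝ) := by exact_mod_cast Nat.one_le_of_lt hm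
  have hmpow : (m : ℝ) ^ ((N - 1 : ℕ) : ℝ) = (m : ℝ) ^ (N - 1) := by
    rw [Real.rpow_natCast]
  have hmpow_pos : (0 : ℝ) < (m : ℝ) ^ (N - 1) := by positivity
  have hmpow1 : (1 : ℝ) ≤ (m : ℝ) ^ (N - 1) := one_le_pow₀ hm1
  set L : ℝ := 1 / (γ * (m : ℝ) ^ (N - 1)) with hLdef
  have hLpos : 0 < L := by positivity
  -- every element of the set is at least `L`
  have hbound : ∀ y ∈ {x : ℝ | ∃ k : ℕ, 1 ≤ k ∧ k ≤ m ∧ x = ‖lam ^ k - 1‖}, L ≤ y := by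
    rintro y ⟨k, hk1, hkm, rfl⟩
    rcases eq_or_lt_of_le hk1 with h1 | h2
    · -- k = 1
      rw [← h1, pow_one]
      have h1γ : 1 / γ ≤ c := by
        rw [hγ]
        calc 1 / (1 / c + 1 / 2) ≤ 1 / (1 / c) := by
              apply one_div_le_one_div_of_le (by positivity); linarith
          _ = c := one_div_one_div c
      calc L ≤ 1 / γ := by
            apply one_div_le_one_div_of_le hγpos; nlinarith
        _ ≤ c := h1γ
    · -- 2 ≤ k
      have hk2 : 2 ≤ k := h2
      have hkR : (2 : ℝ) ≤ (k : ℝ) := by exact_mod_cast hk2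
      have hkpos : (0 : ℝ) < (k : ℝ) := by linarith
      set x : ℝ := (k : ℝ) * θ with hx
      have hpowexp : lam ^ k = Complex.exp (2 * Real.pi * Complex.I * (x : ℝ)) := by
        rw [hlam, ← Complex.exp_nat_mul]
        congr 1
        rw [hx]; push_cast; ring
      have hkey := norm_exp_sub_one_ge x
      rw [← hpowexp] at hkey
      have hdist : (1 : ℝ) / (k : ℝ) ^ (N - 1) ≤ |x - round x| := by
        have h1 := hdio (round x) k hk2
        have : |x - round x| = (k : ℝ) * |θ - (round x : ℝ) / k| := by
          rw [← abs_of_pos hkpos, ← abs_mul]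
          congr 1
          rw [hx]; field_simp; rw [abs_of_pos hkpos]; ring
        rw [this]
        have hNpos : 0 < N := by omega
        have hkpow : (k : ℝ) ^ N = (k : ℝ) ^ (N - 1) * k := by
          rw [← pow_succ]
          congr 1
          omega
        rw [hkpow] at h1
        have hkpow_pos : (0 : ℝ) < (k : ℝ) ^ (N - 1) := by positivity
        calc (1 : ℝ) / (k : ℝ) ^ (N - 1) = (k : ℝ) * (1 / ((k : ℝ) ^ (N - 1) * k)) := by
              field_simp
          _ ≤ (k : ℝ) * |θ - (round x : ℝ) / k| := by
              apply mul_le_mul_of_nonneg_left h1 (by linarith)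
      have hmk : (1 : ℝ) / (m : ℝ) ^ (N - 1) ≤ 1 / (k : ℝ) ^ (N - 1) := by
        apply one_div_le_one_div_of_le (by positivity)
        exact pow_le_pow_left₀ (by linarith) (by exact_mod_cast hkm) _
      have hL2 : L ≤ 2 / (m : ℝ) ^ (N - 1) := by
        rw [hLdef]
        have : (1 / 2 : ℝ) * (m : ℝ) ^ (N - 1) ≤ γ * (m : ℝ) ^ (N - 1) := by
          apply mul_le_mul_of_nonneg_right _ (le_of_lt hmpow_pos)
          have h1c : 0 < 1 / c := by positivity
          rw [hγ]; linarith
        calc 1 / (γ * (m : ℝ) ^ (N - 1)) ≤ 1 / ((1 / 2 : ℝ) * (m : ℝ) ^ (N - 1)) := by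
              apply one_div_le_one_div_of_le (by positivity) this
          _ = 2 / (m : ℝ) ^ (N - 1) := by field_simp
      calc L ≤ 2 / (m : ℝ) ^ (N - 1) := hL2
        _ = 2 * (1 / (m : ℝ) ^ (N - 1)) := by ring
        _ ≤ 2 * (1 / (k : ℝ) ^ (N - 1)) := by linarith
        _ ≤ 2 * |x - round x| := by linarith
        _ ≤ ‖lam ^ k - 1‖ := hkey
  have hnonempty : {x : ℝ | ∃ k : ℕ, 1 ≤ k ∧ k ≤ m ∧ x = ‖lam ^ k - 1‖}.Nonempty :=
    ⟨‖lam ^ 1 - 1‖, 1, le_refl 1, by omega, rfl⟩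
  have hΩ : L ≤ OmegaMin lam m := le_csInf hnonempty hbound
  have hΩpos : 0 < OmegaMin lam m := lt_of_lt_of_le hLpos hΩ
  calc 1 / OmegaMin lam m ≤ 1 / L := one_div_le_one_div_of_le hLpos hΩ
    _ = γ * (m : ℝ) ^ (N - 1) := by rw [hLdef, one_div_one_div]
    _ = γ * (m : ℝ) ^ ((N - 1 : ℕ) : ℝ) := by rw [hmpow]

/-- the set of `λ ∈ S¹` satisfying Siegel's diophantine condition
(`∃ β ≥ 1, γ > 0` with `1/Ω_λ(m) ≤ γ m^β` for all `m ≥ 2`) has full Lebesgue measure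
in `S¹`, i.e. parametrizing `λ = e^{2πiθ}` by `θ ∈ [0,1]`, the set of parameters
failing the condition is Lebesgue-null. -/
theorem siegel_condition_full_measure :
    volume {θ : ℝ | θ ∈ Set.Icc (0 : ℝ) 1 ∧
      ¬ ∃ β : ℝ, 1 ≤ β ∧ ∃ γ : ℝ, 0 < γ ∧
        ∀ m : ℕ, 2 ≤ m →
          1 / OmegaMin (Complex.exp (2 * Real.pi * Complex.I * θ)) m
            ≤ γ * (m : ℝ) ^ β} = 0 := by
  refine measure_mono_null
    (?_ : _ ⊆ {θ : ℝ | ¬ Irrational θ} ∪ {θ : ℝ | Liouville θ}) ?_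
  · rintro θ ⟨_, hθ⟩
    by_cases hirr : Irrational θ
    · by_cases hLiou : Liouville θ
      · exact Or.inr hLiou
      · exact absurd (siegel_of_irrational_not_liouville hirr hLiou) hθ
    · exact Or.inl hirr
  · apply measure_union_null
    · have : {θ : ℝ | ¬ Irrational θ} = Set.range ((↑) : ℚ → ℝ) := by
        ext θ
        simp [Irrational, Set.mem_range]
      rw [this]
      exact (Set.countable_range _).measure_zero _
    · exact volume_setOf_liouville
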